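/- arXiv:2109.13660 — 2 statements merged into one kernel-verified Lean document; each statement's English description precedes it below -/
import Mathlib

section
/- Let $q > 2$, $\alpha < q/2$, and let $T : \mathcal{H} \to L^q(X)$ be bounded. Then the following are equivalent (with comparable implicit constants): (i) for all $N$ and all orthonormal $f_1, \ldots, f_N \in \mathcal{H}$, $\int_X \big(\sum_{n=1}^N |Tf_n|^2\big)^{q/2} dx \lesssim N^\alpha$; (ii) for all $W \in L^{2q/(q-2)}(X)$, the operator $WT$ satisfies $\sup_N N^{-1/2 + (q-2\alpha)/(2q)} \big(\sum_{n=1}^N s_n(WT)^2\big)^{1/2} \lesssim \|W\|_{L^{2q/(q-2)}}$. -/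
open MeasureTheory
open scoped ENNReal


lemma aux_forward {X : Type*} [MeasurableSpace X] (μ : Measure X)
    (q α C : ℝ) (hq : 2 < q) (hC : 0 < C)
    {N : ℕ} (hN : 1 ≤ N) (g : Fin N → X → ℂ) (hgm : ∀ n, StronglyMeasurable (g n))
    (hbound : ∫⁻ x, (ENNReal.ofReal (∑ n, ‖g n x‖ ^ 2)) ^ (q / 2) ∂μ
        ≤ ENNReal.ofReal (C * (N : ℝ) ^ α))
    (W : X → ℂ) (hW : MemLp W (ENNReal.ofReal (2 * q / (q - 2))) μ) :
    ENNReal.ofReal ((N : ℝ) ^ (-1 + (q - 2 * α) / q)) *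
        ∑ n, ∫⁻ x, ENNReal.ofReal (‖W x‖ ^ 2 * ‖g n x‖ ^ 2) ∂μ
      ≤ ENNReal.ofReal (C ^ (2 / q)) *
          (eLpNorm W (ENNReal.ofReal (2 * q / (q - 2))) μ) ^ 2 := by
  have hq0 : (0:ℝ) < q := by linarith
  have hq2 : (0:ℝ) < q - 2 := by linarith
  have hr0 : (0:ℝ) < 2 * q / (q - 2) := by positivity
  have hpW0 : ENNReal.ofReal (2 * q / (q - 2)) ≠ 0 := by
    simp [ENNReal.ofReal_eq_zero, not_le, hr0]
  have hpWtop : ENNReal.ofReal (2 * q / (q - 2)) ≠ ∞ := ENNReal.ofReal_ne_top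
  have hpWr : (ENNReal.ofReal (2 * q / (q - 2))).toReal = 2 * q / (q - 2) :=
    ENNReal.toReal_ofReal hr0.le
  have hexp : (-1 + (q - 2 * α) / q) = -(2 * α) / q := by field_simp; ring
  have hconj : (q / (q - 2)).HolderConjugate (q / 2) := by
    rw [Real.holderConjugate_iff]; constructor
    · rw [lt_div_iff₀ hq2]; linarith
    · rw [inv_div, inv_div]; field_simp; ring
  have hWm : AEMeasurable (fun x => ENNReal.ofReal (‖W x‖ ^ 2)) μ :=
    ENNReal.measurable_ofReal.comp_aemeasurable ((hW.1.norm.aemeasurable).pow_const 2)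
  have hGm : Measurable (fun x => ENNReal.ofReal (∑ n, ‖g n x‖ ^ 2)) := by
    apply ENNReal.measurable_ofReal.comp
    exact Finset.measurable_sum _ fun n _ => ((hgm n).norm.measurable).pow_const 2
  have step1 : ∑ n, ∫⁻ x, ENNReal.ofReal (‖W x‖ ^ 2 * ‖g n x‖ ^ 2) ∂μ
      = ∫⁻ x, ENNReal.ofReal (‖W x‖ ^ 2) * ENNReal.ofReal (∑ n, ‖g n x‖ ^ 2) ∂μ := by
    rw [← lintegral_finset_sum']
    · apply lintegral_congr
      intro x
      rw [← ENNReal.ofReal_sum_of_nonneg (fun n _ => by positivity),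
        ← ENNReal.ofReal_mul (by positivity), Finset.mul_sum]
    · intro n _
      exact ENNReal.measurable_ofReal.comp_aemeasurable
        (((hW.1.norm.aemeasurable).pow_const 2).mul
          ((((hgm n).norm.measurable).pow_const 2).aemeasurable))
  have step2 : ∫⁻ x, ENNReal.ofReal (‖W x‖ ^ 2) * ENNReal.ofReal (∑ n, ‖g n x‖ ^ 2) ∂μ
      ≤ (∫⁻ x, ENNReal.ofReal (‖W x‖ ^ 2) ^ (q / (q - 2)) ∂μ) ^ ((q - 2) / q) *
        (∫⁻ x, ENNReal.ofReal (∑ n, ‖g n x‖ ^ 2) ^ (q / 2) ∂μ) ^ (2 / q) := by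
    have := ENNReal.lintegral_mul_le_Lp_mul_Lq μ hconj hWm hGm.aemeasurable
    simpa [one_div, inv_div] using this
  have hWeq : (∫⁻ x, ENNReal.ofReal (‖W x‖ ^ 2) ^ (q / (q - 2)) ∂μ) ^ ((q - 2) / q)
      = (eLpNorm W (ENNReal.ofReal (2 * q / (q - 2))) μ) ^ 2 := by
    rw [eLpNorm_eq_lintegral_rpow_enorm_toReal hpW0 hpWtop, hpWr]
    simp_rw [enorm_eq_nnnorm]
    have hpt : ∀ x : X, ENNReal.ofReal (‖W x‖ ^ 2) ^ (q / (q - 2))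
        = (‖W x‖₊ : ℝ≥0∞) ^ (2 * q / (q - 2)) := by
      intro x
      have e1 : ENNReal.ofReal (‖W x‖ ^ 2) = ENNReal.ofReal ‖W x‖ ^ (2:ℝ) := by
        rw [ENNReal.ofReal_rpow_of_nonneg (norm_nonneg _) (by norm_num)]
        norm_num
      have e2 : ((‖W x‖₊ : ℝ≥0∞)) = ENNReal.ofReal ‖W x‖ :=
        (ofReal_norm _).symm
      rw [e1, e2, ← ENNReal.rpow_mul, mul_div_assoc]
    simp_rw [hpt]
    rw [← ENNReal.rpow_natCast _ 2, ← ENNReal.rpow_mul]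
    congr 1
    push_cast
    field_simp
  have step3 : (∫⁻ x, ENNReal.ofReal (∑ n, ‖g n x‖ ^ 2) ^ (q / 2) ∂μ) ^ (2 / q)
      ≤ ENNReal.ofReal ((C * (N:ℝ) ^ α) ^ (2 / q)) := by
    rw [← ENNReal.ofReal_rpow_of_nonneg (by positivity) (by positivity)]
    exact ENNReal.rpow_le_rpow hbound (by positivity)
  have hN0 : (0:ℝ) < (N:ℝ) := by exact_mod_cast hN
  have hreal : (N:ℝ) ^ (-(2*α)/q) * (C * (N:ℝ) ^ α) ^ (2/q) = C ^ (2/q) := by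
    have h1 : (N:ℝ) ^ (-(2*α)/q) * ((N:ℝ) ^ α) ^ (2/q) = 1 := by
      rw [← Real.rpow_mul (Nat.cast_nonneg N), ← Real.rpow_add hN0]
      rw [show -(2*α)/q + α * (2/q) = 0 by field_simp; ring, Real.rpow_zero]
    calc (N:ℝ) ^ (-(2*α)/q) * (C * (N:ℝ) ^ α) ^ (2/q)
        = C ^ (2/q) * ((N:ℝ) ^ (-(2*α)/q) * ((N:ℝ) ^ α) ^ (2/q)) := by
          rw [Real.mul_rpow hC.le (Real.rpow_nonneg (Nat.cast_nonneg N) _)]; ring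
      _ = C ^ (2/q) := by rw [h1, mul_one]
  rw [hexp, step1]
  calc ENNReal.ofReal ((N:ℝ) ^ (-(2*α)/q)) *
        ∫⁻ x, ENNReal.ofReal (‖W x‖ ^ 2) * ENNReal.ofReal (∑ n, ‖g n x‖ ^ 2) ∂μ
      ≤ ENNReal.ofReal ((N:ℝ) ^ (-(2*α)/q)) *
          ((∫⁻ x, ENNReal.ofReal (‖W x‖ ^ 2) ^ (q / (q - 2)) ∂μ) ^ ((q - 2) / q) *
           (∫⁻ x, ENNReal.ofReal (∑ n, ‖g n x‖ ^ 2) ^ (q / 2) ∂μ) ^ (2 / q)) :=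
        mul_le_mul_right step2 _
    _ ≤ ENNReal.ofReal ((N:ℝ) ^ (-(2*α)/q)) *
          ((eLpNorm W (ENNReal.ofReal (2 * q / (q - 2))) μ) ^ 2 *
            ENNReal.ofReal ((C * (N:ℝ) ^ α) ^ (2 / q))) := by
        rw [hWeq]
        exact mul_le_mul_right (mul_le_mul_right step3 _) _
    _ = (ENNReal.ofReal ((N:ℝ) ^ (-(2*α)/q)) * ENNReal.ofReal ((C * (N:ℝ) ^ α) ^ (2 / q))) *
          (eLpNorm W (ENNReal.ofReal (2 * q / (q - 2))) μ) ^ 2 := by ring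
    _ = ENNReal.ofReal (C ^ (2 / q)) *
          (eLpNorm W (ENNReal.ofReal (2 * q / (q - 2))) μ) ^ 2 := by
        rw [← ENNReal.ofReal_mul (by positivity), hreal]

lemma aux_sum_rpow {ι : Type*} (s : Finset ι) (b : ι → ℝ≥0∞) {r : ℝ} (hr : 0 < r) :
    (∑ i ∈ s, b i) ^ r ≤ (s.card : ℝ≥0∞) ^ r * ∑ i ∈ s, b i ^ r := by
  have h1 : ∀ i ∈ s, b i ≤ (∑ j ∈ s, b j ^ r) ^ (1/r) := by
    intro i hi
    have h : b i ^ r ≤ ∑ j ∈ s, b j ^ r :=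
      Finset.single_le_sum (f := fun j => b j ^ r) (fun j _ => zero_le) hi
    calc b i = (b i ^ r) ^ (1/r) := by
          rw [← ENNReal.rpow_mul, mul_one_div, div_self hr.ne', ENNReal.rpow_one]
      _ ≤ _ := ENNReal.rpow_le_rpow h (by positivity)
  have h2 : (∑ i ∈ s, b i) ≤ (s.card : ℝ≥0∞) * (∑ j ∈ s, b j ^ r) ^ (1/r) := by
    calc ∑ i ∈ s, b i ≤ ∑ _i ∈ s, (∑ j ∈ s, b j ^ r) ^ (1/r) := Finset.sum_le_sum h1
      _ = _ := by rw [Finset.sum_const, nsmul_eq_mul]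
  calc (∑ i ∈ s, b i) ^ r ≤ ((s.card : ℝ≥0∞) * (∑ j ∈ s, b j ^ r) ^ (1/r)) ^ r :=
        ENNReal.rpow_le_rpow h2 hr.le
    _ = (s.card : ℝ≥0∞) ^ r * ∑ j ∈ s, b j ^ r := by
        rw [ENNReal.mul_rpow_of_nonneg _ _ hr.le, ← ENNReal.rpow_mul, one_div,
          inv_mul_cancel₀ hr.ne', ENNReal.rpow_one]

lemma aux_reverse {X : Type*} [MeasurableSpace X] (μ : Measure X)
    (q α C : ℝ) (hq : 2 < q) (hC : 0 < C)
    {N : ℕ} (hN : 1 ≤ N) (g : Fin N → X → ℂ) (hgm : ∀ n, StronglyMeasurable (g n))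
    (hgq : ∀ n, MemLp (g n) (ENNReal.ofReal q) μ)
    (hrec : ∀ W : X → ℂ, MemLp W (ENNReal.ofReal (2 * q / (q - 2))) μ →
        ENNReal.ofReal ((N : ℝ) ^ (-1 + (q - 2 * α) / q)) *
            ∑ n, ∫⁻ x, ENNReal.ofReal (‖W x‖ ^ 2 * ‖g n x‖ ^ 2) ∂μ
          ≤ ENNReal.ofReal C * (eLpNorm W (ENNReal.ofReal (2 * q / (q - 2))) μ) ^ 2) :
    ∫⁻ x, (ENNReal.ofReal (∑ n, ‖g n x‖ ^ 2)) ^ (q / 2) ∂μ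
      ≤ ENNReal.ofReal (C ^ (q / 2) * (N : ℝ) ^ α) := by
  have hq0 : (0:ℝ) < q := by linarith
  have hq2 : (0:ℝ) < q - 2 := by linarith
  have hr0 : (0:ℝ) < 2 * q / (q - 2) := by positivity
  have hpW0 : ENNReal.ofReal (2 * q / (q - 2)) ≠ 0 := by
    simp [ENNReal.ofReal_eq_zero, not_le, hr0]
  have hpWtop : ENNReal.ofReal (2 * q / (q - 2)) ≠ ∞ := ENNReal.ofReal_ne_top
  have hpWr : (ENNReal.ofReal (2 * q / (q - 2))).toReal = 2 * q / (q - 2) :=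
    ENNReal.toReal_ofReal hr0.le
  have hexp : (-1 + (q - 2 * α) / q) = -(2 * α) / q := by field_simp; ring
  set F : X → ℝ := fun x => ∑ n, ‖g n x‖ ^ 2 with hFdef
  have hFnn : ∀ x, 0 ≤ F x := fun x => Finset.sum_nonneg fun n _ => by positivity
  have hFm : Measurable F :=
    Finset.measurable_sum _ fun n _ => ((hgm n).norm.measurable).pow_const 2
  set I : ℝ≥0∞ := ∫⁻ x, (ENNReal.ofReal (F x)) ^ (q / 2) ∂μ with hIdef
  -- finiteness of I
  have hgint : ∀ n, ∫⁻ x, ENNReal.ofReal (‖g n x‖ ^ 2) ^ (q / 2) ∂μ < ∞ := by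
    intro n
    have hq0' : ENNReal.ofReal q ≠ 0 := by simp [ENNReal.ofReal_eq_zero, not_le, hq0]
    have hmem := (hgq n).2
    rw [eLpNorm_eq_lintegral_rpow_enorm_toReal hq0' ENNReal.ofReal_ne_top,
      ENNReal.toReal_ofReal hq0.le] at hmem
    have hpt : ∀ x, ENNReal.ofReal (‖g n x‖ ^ 2) ^ (q / 2) = (‖g n x‖₊ : ℝ≥0∞) ^ q := by
      intro x
      have e1 : ENNReal.ofReal (‖g n x‖ ^ 2) = ENNReal.ofReal ‖g n x‖ ^ (2:ℝ) := by
        rw [ENNReal.ofReal_rpow_of_nonneg (norm_nonneg _) (by norm_num)]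
        norm_num
      rw [e1, ← enorm_eq_nnnorm, ← ofReal_norm, ← ENNReal.rpow_mul]
      congr 1
      ring
    simp_rw [hpt]
    rw [ENNReal.rpow_lt_top_iff_of_pos (by positivity : (0:ℝ) < 1 / q)] at hmem
    exact hmem
  have hIfin : I < ∞ := by
    have hle : I ≤ (N : ℝ≥0∞) ^ (q / 2) *
        ∑ n, ∫⁻ x, ENNReal.ofReal (‖g n x‖ ^ 2) ^ (q / 2) ∂μ := by
      rw [hIdef]
      calc ∫⁻ x, (ENNReal.ofReal (F x)) ^ (q / 2) ∂μ
          ≤ ∫⁻ x, (N : ℝ≥0∞) ^ (q / 2) * ∑ n, ENNReal.ofReal (‖g n x‖ ^ 2) ^ (q / 2) ∂μ := by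
            apply lintegral_mono
            intro x
            dsimp only
            have e : ENNReal.ofReal (F x) = ∑ n, ENNReal.ofReal (‖g n x‖ ^ 2) :=
              ENNReal.ofReal_sum_of_nonneg (fun n _ => by positivity)
            rw [e]
            simpa only [Finset.card_univ, Fintype.card_fin] using aux_sum_rpow Finset.univ
              (fun n => ENNReal.ofReal (‖g n x‖ ^ 2)) (by positivity : (0:ℝ) < q / 2)
        _ = (N : ℝ≥0∞) ^ (q / 2) *
            ∑ n, ∫⁻ x, ENNReal.ofReal (‖g n x‖ ^ 2) ^ (q / 2) ∂μ := by
            have hmeas : ∀ n : Fin N,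
                Measurable fun x => ENNReal.ofReal (‖g n x‖ ^ 2) ^ (q / 2) := fun n =>
              ((((hgm n).norm.measurable).pow_const 2).ennreal_ofReal).pow_const _
            rw [lintegral_const_mul _ (Finset.measurable_sum _ fun n _ => hmeas n),
              lintegral_finset_sum _ (fun n _ => hmeas n)]
    refine lt_of_le_of_lt hle (ENNReal.mul_lt_top ?_ ?_)
    · exact ENNReal.rpow_lt_top_of_nonneg (by positivity) (by simp)
    · exact ENNReal.sum_lt_top.mpr fun n _ => hgint n
  -- the test function W
  set W : X → ℂ := fun x => ((F x ^ ((q - 2) / 4) : ℝ) : ℂ) with hWdef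
  have hWnorm : ∀ x, ‖W x‖ = F x ^ ((q - 2) / 4) := by
    intro x
    rw [hWdef]
    simp only [Complex.norm_real, Real.norm_eq_abs]
    exact abs_of_nonneg (Real.rpow_nonneg (hFnn x) _)
  have hWmeas : AEStronglyMeasurable W μ :=
    (Complex.measurable_ofReal.comp (hFm.pow_const _)).aestronglyMeasurable
  have hWlp : eLpNorm W (ENNReal.ofReal (2 * q / (q - 2))) μ = I ^ ((q - 2) / (2 * q)) := by
    rw [eLpNorm_eq_lintegral_rpow_enorm_toReal hpW0 hpWtop, hpWr]
    simp_rw [enorm_eq_nnnorm]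
    have hpt : ∀ x, (‖W x‖₊ : ℝ≥0∞) ^ (2 * q / (q - 2))
        = ENNReal.ofReal (F x) ^ (q / 2) := by
      intro x
      rw [← enorm_eq_nnnorm, ← ofReal_norm, hWnorm x,
        ← ENNReal.ofReal_rpow_of_nonneg (hFnn x) (by positivity),
        ← ENNReal.rpow_mul]
      congr 1
      field_simp
      ring
    simp_rw [hpt]
    rw [← hIdef]
    congr 1
    rw [one_div_div]
  have hWmem : MemLp W (ENNReal.ofReal (2 * q / (q - 2))) μ :=
    ⟨hWmeas, by rw [hWlp]; exact ENNReal.rpow_lt_top_of_nonneg (by positivity) hIfin.ne⟩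
  -- the sum in (ii) equals I for this W
  have hsum : ∑ n, ∫⁻ x, ENNReal.ofReal (‖W x‖ ^ 2 * ‖g n x‖ ^ 2) ∂μ = I := by
    have hmeas : ∀ n : Fin N,
        Measurable fun x => ENNReal.ofReal (‖W x‖ ^ 2 * ‖g n x‖ ^ 2) := fun n =>
      (((Complex.measurable_ofReal.comp (hFm.pow_const _)).norm.pow_const 2).mul
        (((hgm n).norm.measurable).pow_const 2)).ennreal_ofReal
    rw [← lintegral_finset_sum _ (fun n _ => hmeas n), hIdef]
    apply lintegral_congr
    intro x
    rw [← ENNReal.ofReal_sum_of_nonneg (fun n _ => by positivity)]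
    have e : ∑ n, ‖W x‖ ^ 2 * ‖g n x‖ ^ 2 = F x ^ (q / 2) := by
      rw [← Finset.mul_sum, hWnorm x]
      have e1 : (F x ^ ((q - 2) / 4)) ^ 2 = F x ^ ((q - 2) / 2) := by
        rw [← Real.rpow_natCast (F x ^ ((q - 2) / 4)) 2, ← Real.rpow_mul (hFnn x)]
        norm_num
        congr 1
        ring
      have e2 : F x ^ ((q - 2) / 2) * F x = F x ^ (q / 2) := by
        have e3 := Real.rpow_add' (y := (q - 2) / 2) (z := 1) (hFnn x)
          (by intro hh; linarith)
        rw [Real.rpow_one] at e3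
        rw [← e3]
        congr 1
        ring
      rw [e1]
      exact e2
    rw [e, ENNReal.ofReal_rpow_of_nonneg (hFnn x) (by positivity)]
  -- apply the hypothesis
  have key := hrec W hWmem
  rw [hsum, hWlp, hexp] at key
  have hsq : (I ^ ((q - 2) / (2 * q))) ^ 2 = I ^ ((q - 2) / q) := by
    rw [← ENNReal.rpow_natCast _ 2, ← ENNReal.rpow_mul]
    congr 1
    push_cast
    field_simp
  rw [hsq] at key
  -- conclude
  rw [hIdef] at key hIfin ⊢
  set J := ∫⁻ x, ENNReal.ofReal (F x) ^ (q / 2) ∂μ with hJ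
  rcases eq_or_ne J 0 with h0 | h0
  · rw [h0]; exact zero_le
  have hJtop : J ≠ ⊤ := hIfin.ne
  have hN0 : (0:ℝ) < (N:ℝ) := by exact_mod_cast hN
  have hsplit : J = J ^ ((q - 2) / q) * J ^ (2 / q) := by
    rw [← ENNReal.rpow_add _ _ h0 hJtop,
      show (q - 2) / q + 2 / q = 1 by field_simp; ring, ENNReal.rpow_one]
  have hpow0 : J ^ ((q - 2) / q) ≠ 0 :=
    (ENNReal.rpow_pos (zero_lt_iff.mpr h0) hJtop).ne'
  have hpowtop : J ^ ((q - 2) / q) ≠ ⊤ :=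
    ENNReal.rpow_ne_top_of_nonneg (by positivity) hJtop
  have key2 : ENNReal.ofReal ((N:ℝ) ^ (-(2 * α) / q)) * J ^ (2 / q)
      ≤ ENNReal.ofReal C := by
    conv at key => lhs; rw [hsplit]
    rw [show ENNReal.ofReal ((N:ℝ) ^ (-(2 * α) / q)) * (J ^ ((q - 2) / q) * J ^ (2 / q))
        = (ENNReal.ofReal ((N:ℝ) ^ (-(2 * α) / q)) * J ^ (2 / q)) * J ^ ((q - 2) / q)
        from by ring] at key
    exact (ENNReal.mul_le_mul_iff_left hpow0 hpowtop).mp key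
  have key3 : J ^ (2 / q) ≤ ENNReal.ofReal (C * (N:ℝ) ^ (2 * α / q)) := by
    have hmul := mul_le_mul_right key2 (ENNReal.ofReal ((N:ℝ) ^ (2 * α / q)))
    rw [← mul_assoc, ← ENNReal.ofReal_mul (by positivity), ← Real.rpow_add hN0,
      show 2 * α / q + -(2 * α) / q = 0 by ring, Real.rpow_zero, ENNReal.ofReal_one,
      one_mul, ← ENNReal.ofReal_mul (by positivity), mul_comm ((N:ℝ) ^ (2 * α / q)) C]
      at hmul
    exact hmul
  have final : J ≤ ENNReal.ofReal ((C * (N:ℝ) ^ (2 * α / q)) ^ (q / 2)) := by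
    have h5 := ENNReal.rpow_le_rpow key3 (by positivity : (0:ℝ) ≤ q / 2)
    rw [← ENNReal.rpow_mul, show 2 / q * (q / 2) = 1 by field_simp, ENNReal.rpow_one] at h5
    rw [← ENNReal.ofReal_rpow_of_nonneg (by positivity) (by positivity)]
    exact h5
  refine final.trans ?_
  apply ENNReal.ofReal_le_ofReal
  rw [Real.mul_rpow hC.le (Real.rpow_nonneg hN0.le _), ← Real.rpow_mul hN0.le,
    show 2 * α / q * (q / 2) = α by field_simp]
/-- duality. Let `q > 2`, `α < q/2`, `T : H → L^q(X)` bounded. The following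
are equivalent: (i) for all orthonormal `f₁,…,f_N`, `∫ (∑|Tfₙ|²)^{q/2} ≤ C N^α`; (ii) for
all `W ∈ L^{2q/(q-2)}`, `N^{-1/2+(q-2α)/(2q)} (∑_{n=1}^N sₙ(WT)²)^{1/2} ≲ ‖W‖_{2q/(q-2)}`,
where, by the variational principle, `∑_{n=1}^N sₙ(WT)²` is the supremum of
`∑ₙ ∫ |W|²|Tfₙ|²` over orthonormal `f₁,…,f_N`; here (ii) is stated in this (squared)
variational form. -/
theorem statement4
    {H : Type*} [NormedAddCommGroup H] [InnerProductSpace ℂ H] [CompleteSpace H]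
    {X : Type*} [MeasurableSpace X] (μ : Measure X) [SigmaFinite μ]
    (q α : ℝ) (hq : 2 < q) (hα : α < q / 2) [Fact (1 ≤ ENNReal.ofReal q)]
    (T : H →L[ℂ] Lp ℂ (ENNReal.ofReal q) μ) :
    (∃ C : ℝ, 0 < C ∧ ∀ (N : ℕ) (f : Fin N → H), Orthonormal ℂ f →
        ∫⁻ x, (ENNReal.ofReal (∑ n, ‖(T (f n) : X → ℂ) x‖ ^ 2)) ^ (q / 2) ∂μ
          ≤ ENNReal.ofReal (C * (N : ℝ) ^ α))
    ↔ (∃ C : ℝ, 0 < C ∧ ∀ W : X → ℂ, MemLp W (ENNReal.ofReal (2 * q / (q - 2))) μ →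
        ∀ (N : ℕ), 1 ≤ N → ∀ f : Fin N → H, Orthonormal ℂ f →
          ENNReal.ofReal ((N : ℝ) ^ (-1 + (q - 2 * α) / q)) *
              ∑ n, ∫⁻ x, ENNReal.ofReal (‖W x‖ ^ 2 * ‖(T (f n) : X → ℂ) x‖ ^ 2) ∂μ
            ≤ ENNReal.ofReal C * (eLpNorm W (ENNReal.ofReal (2 * q / (q - 2))) μ) ^ 2) := by
  have hq0 : (0:ℝ) < q := by linarith
  constructor
  · rintro ⟨C, hC, h⟩
    refine ⟨C ^ (2 / q), by positivity, ?_⟩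
    intro W hW N hN f hf
    exact aux_forward μ q α C hq hC hN (fun n => (T (f n) : X → ℂ))
      (fun n => Lp.stronglyMeasurable _) (h N f hf) W hW
  · rintro ⟨C, hC, h⟩
    refine ⟨max 1 (C ^ (q / 2)), lt_of_lt_of_le one_pos (le_max_left _ _), ?_⟩
    intro N f hf
    rcases Nat.eq_zero_or_pos N with hN | hN
    · subst hN
      have : ∀ x : X, (∑ n : Fin 0, ‖(T (f n) : X → ℂ) x‖ ^ 2) = 0 := fun x => by simp
      simp only [this, ENNReal.ofReal_zero]
      rw [ENNReal.zero_rpow_of_pos (by positivity), lintegral_zero]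
      exact zero_le
    · have key := aux_reverse μ q α C hq hC hN (fun n => (T (f n) : X → ℂ))
        (fun n => Lp.stronglyMeasurable _) (fun n => Lp.memLp _)
        (fun W hW => h W hW N hN f hf)
      refine key.trans (ENNReal.ofReal_le_ofReal ?_)
      have hNα : (0:ℝ) ≤ (N:ℝ) ^ α := Real.rpow_nonneg (Nat.cast_nonneg N) α
      exact mul_le_mul_of_nonneg_right (le_max_right _ _) hNα
end

section
/- (Fefferman–de la Llave type identity) For $d \ge 1$ and $0 < \sigma < d$ there is a constant $c_{d,\sigma} > 0$ such that for all distinct $x, y \in \mathbb{R}^d$, $|x-y|^{-d+\sigma} = c_{d,\sigma} \int_{\mathbb{R}^d} \int_0^\infty \mathbb{1}_{B_r(a)}(x) \mathbb{1}_{B_r(a)}(y) \frac{dr}{r^{2d+1-\sigma}} \, da$. -/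
open MeasureTheory
open scoped ENNReal

set_option maxHeartbeats 1000000

/-- Fefferman–de la Llave type identity: for `0 < σ < d` there is
`c = c_{d,σ} > 0` such that for all distinct `x, y ∈ ℝ^d`,
`|x-y|^{-d+σ} = c ∫_{ℝ^d} ∫_0^∞ 1_{B_r(a)}(x) 1_{B_r(a)}(y) r^{-(2d+1-σ)} dr da`. -/
theorem statement8 (d : ℕ) (hd : 1 ≤ d) (σ : ℝ) (hσ0 : 0 < σ) (hσ : σ < d) :
    ∃ c : ℝ, 0 < c ∧
      ∀ x y : EuclideanSpace ℝ (Fin d), x ≠ y →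
        ‖x - y‖ ^ (-(d : ℝ) + σ)
          = c * ∫ a : EuclideanSpace ℝ (Fin d), ∫ r in Set.Ioi (0 : ℝ),
              (Metric.ball a r).indicator (fun _ => (1 : ℝ)) x *
              (Metric.ball a r).indicator (fun _ => (1 : ℝ)) y /
              r ^ (2 * (d : ℝ) + 1 - σ) := by
  classical
  set E := EuclideanSpace ℝ (Fin d) with hE
  have hdim : Module.finrank ℝ E = d := finrank_euclideanSpace_fin
  have hd1 : (1 : ℝ) ≤ (d : ℝ) := by exact_mod_cast hd
  set p : ℝ := 2 * d - σ with hp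
  have hpd : (d : ℝ) < p := by rw [hp]; linarith
  have hp0 : 0 < p := by linarith
  -- a fixed unit vector
  set e₀ : E := EuclideanSpace.single (⟨0, hd⟩ : Fin d) (1 : ℝ) with he₀def
  have he₀ : ‖e₀‖ = 1 := by
    rw [he₀def]
    rw [EuclideanSpace.norm_single]
    exact norm_one
  set F : E → ℝ := fun b => (max (dist e₀ b) ‖b‖) ^ (-p) with hF
  have hbase : ∀ b : E, 0 < max (dist e₀ b) ‖b‖ := by
    intro b
    rcases eq_or_ne b 0 with rfl | hb
    · refine lt_of_lt_of_le ?_ (le_max_left _ _)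
      simp [dist_eq_norm, he₀]
    · exact lt_of_lt_of_le (norm_pos_iff.mpr hb) (le_max_right _ _)
  have hFnonneg : ∀ b, 0 ≤ F b := fun b => Real.rpow_nonneg (hbase b).le _
  have hFpos : ∀ b, 0 < F b := fun b => Real.rpow_pos_of_pos (hbase b) _
  have hFcont : Continuous F := by
    refine Continuous.rpow_const ((continuous_const.dist continuous_id).max continuous_norm) ?_
    exact fun b => Or.inl (hbase b).ne'
  -- domination: F b ≤ 4^p * (1 + ‖b‖)^(-p)
  have hbound : ∀ b : E, F b ≤ (4 : ℝ) ^ p * (1 + ‖b‖) ^ (-p) := by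
    intro b
    have h2 : (1 : ℝ) - ‖b‖ ≤ dist e₀ b := by
      have h := norm_sub_norm_le e₀ b
      rw [← dist_eq_norm] at h
      rw [he₀] at h
      linarith
    have h1 : (1 + ‖b‖) / 4 ≤ max (dist e₀ b) ‖b‖ := by
      have h3 := le_max_left (dist e₀ b) ‖b‖
      have h4 := le_max_right (dist e₀ b) ‖b‖
      linarith
    have h5 : 0 < (1 + ‖b‖) / 4 := by positivity
    have h6 := Real.rpow_le_rpow_of_nonpos h5 h1 (neg_nonpos.mpr hp0.le)
    refine le_trans h6 (le_of_eq ?_)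
    rw [Real.div_rpow (by positivity) (by norm_num : (0:ℝ) ≤ 4),
      Real.rpow_neg (by norm_num : (0:ℝ) ≤ 4), div_eq_mul_inv, inv_inv, mul_comm]
  have hFint : Integrable F := by
    have hint : Integrable (fun b : E => (4 : ℝ) ^ p * (1 + ‖b‖) ^ (-p)) :=
      (integrable_one_add_norm (by rw [hdim]; exact hpd)).const_mul _
    refine hint.mono' hFcont.aestronglyMeasurable ?_
    filter_upwards with b
    rw [Real.norm_eq_abs, abs_of_nonneg (hFnonneg b)]
    exact hbound b
  set K : ℝ := ∫ b : E, F b with hK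
  have hKpos : 0 < K := by
    rw [hK]
    refine (integral_pos_iff_support_of_nonneg (fun b => hFnonneg b) hFint).mpr ?_
    have hsupp : Function.support F = Set.univ := by
      ext b; simp [Function.mem_support, (hFpos b).ne']
    rw [hsupp]
    exact lt_of_lt_of_le (Metric.measure_ball_pos volume (0 : E) one_pos)
      (measure_mono (Set.subset_univ _))
  refine ⟨p / K, div_pos hp0 hKpos, ?_⟩
  intro x y hxy
  set t : ℝ := ‖x - y‖ with ht
  have ht0 : 0 < t := by rw [ht]; exact norm_sub_pos_iff.mpr hxy
  set g : E → ℝ := fun a => (max (dist x a) (dist y a)) ^ (-p) with hg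
  -- the inner integral
  have hinner : ∀ a : E,
      (∫ r in Set.Ioi (0 : ℝ),
        (Metric.ball a r).indicator (fun _ => (1 : ℝ)) x *
        (Metric.ball a r).indicator (fun _ => (1 : ℝ)) y /
        r ^ (2 * (d : ℝ) + 1 - σ))
      = p⁻¹ * g a := by
    intro a
    set m : ℝ := max (dist x a) (dist y a) with hm
    have hm0 : 0 < m := by
      rcases eq_or_ne a x with rfl | hax
      · refine lt_of_lt_of_le ?_ (le_max_right _ _)
        rw [dist_pos]; exact fun h => hxy h.symm
      · refine lt_of_lt_of_le ?_ (le_max_left _ _)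
        rw [dist_pos]; exact fun h => hax h.symm
    have hfun : (fun r : ℝ =>
        (Metric.ball a r).indicator (fun _ => (1 : ℝ)) x *
        (Metric.ball a r).indicator (fun _ => (1 : ℝ)) y /
        r ^ (2 * (d : ℝ) + 1 - σ))
        = (Set.Ioi m).indicator (fun r : ℝ => r ^ (-(p + 1))) := by
      funext r
      by_cases hr : m < r
      · have hr0 : 0 < r := hm0.trans hr
        have hx' : x ∈ Metric.ball a r := by
          rw [Metric.mem_ball]
          exact lt_of_le_of_lt (le_max_left _ _) hr
        have hy' : y ∈ Metric.ball a r := by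
          rw [Metric.mem_ball]
          exact lt_of_le_of_lt (le_max_right _ _) hr
        rw [Set.indicator_of_mem hx', Set.indicator_of_mem hy',
          Set.indicator_of_mem (Set.mem_Ioi.mpr hr)]
        have hq : 2 * (d : ℝ) + 1 - σ = p + 1 := by rw [hp]; ring
        rw [hq, Real.rpow_neg hr0.le]
        simp [div_eq_mul_inv]
      · have hR : (Set.Ioi m).indicator (fun r : ℝ => r ^ (-(p + 1))) r = 0 :=
          Set.indicator_of_notMem (by simpa [Set.mem_Ioi] using hr) _
        rw [hR]
        rcases le_max_iff.mp (not_lt.mp hr) with h | h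
        · have h' : (Metric.ball a r).indicator (fun _ => (1 : ℝ)) x = 0 :=
            Set.indicator_of_notMem (by simp only [Metric.mem_ball, not_lt]; exact h) _
          rw [h']; simp
        · have h' : (Metric.ball a r).indicator (fun _ => (1 : ℝ)) y = 0 :=
            Set.indicator_of_notMem (by simp only [Metric.mem_ball, not_lt]; exact h) _
          rw [h']; simp
    rw [hfun, setIntegral_indicator measurableSet_Ioi, Set.Ioi_inter_Ioi,
      max_eq_right hm0.le, integral_Ioi_rpow_of_lt (by linarith) hm0]
    have h1 : -(p + 1) + 1 = -p := by ring
    rw [h1, neg_div_neg_eq, div_eq_inv_mul]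
  -- rewrite the outer integral
  have houter : (∫ a : E, ∫ r in Set.Ioi (0 : ℝ),
        (Metric.ball a r).indicator (fun _ => (1 : ℝ)) x *
        (Metric.ball a r).indicator (fun _ => (1 : ℝ)) y /
        r ^ (2 * (d : ℝ) + 1 - σ))
      = p⁻¹ * ∫ a : E, g a := by
    simp_rw [hinner]
    exact integral_const_mul _ _
  -- change of variables for the outer integral
  set u : E := t⁻¹ • (x - y) with hu
  have hu1 : ‖u‖ = 1 := by
    rw [hu, norm_smul, Real.norm_eq_abs, abs_of_pos (inv_pos.mpr ht0), ← ht,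
      inv_mul_cancel₀ ht0.ne']
  have hxy' : x - y = t • u := by
    rw [hu, smul_smul, mul_inv_cancel₀ ht0.ne', one_smul]
  set L : E ≃ₗᵢ[ℝ] E := Submodule.reflection (ℝ ∙ (e₀ - u))ᗮ with hL
  have hLe₀ : L e₀ = u := Submodule.reflection_sub (by rw [he₀, hu1])
  have hgL : ∀ b : E, g (y + t • L b) = t ^ (-p) * F b := by
    intro b
    have h1 : dist y (y + t • L b) = t * ‖b‖ := by
      rw [dist_eq_norm, sub_add_cancel_left, norm_neg, norm_smul, Real.norm_eq_abs,
        abs_of_pos ht0, L.norm_map]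
    have h2 : dist x (y + t • L b) = t * dist e₀ b := by
      rw [dist_eq_norm]
      have h3 : x - (y + t • L b) = t • (u - L b) := by
        rw [smul_sub, ← hxy']; abel
      rw [h3, norm_smul, Real.norm_eq_abs, abs_of_pos ht0, ← hLe₀, ← L.map_sub,
        L.norm_map, ← dist_eq_norm]
    rw [hg]
    simp only []
    rw [h1, h2, ← mul_max_of_nonneg _ _ ht0.le,
      Real.mul_rpow ht0.le (hbase b).le]
  have step1 : (∫ a : E, g a) = ∫ a : E, g (y + a) :=
    (integral_add_left_eq_self g y).symm
  have step2 : (∫ b : E, g (y + t • b))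
      = |((t ^ Module.finrank ℝ E)⁻¹ : ℝ)| • ∫ a : E, g (y + a) :=
    Measure.integral_comp_smul volume (fun a => g (y + a)) t
  have step3 : (∫ b : E, g (y + t • L b)) = ∫ b : E, g (y + t • b) :=
    MeasureTheory.integral_comp L (fun b => g (y + t • b))
  have step4 : (∫ b : E, g (y + t • L b)) = t ^ (-p) * K := by
    simp_rw [hgL]
    rw [integral_const_mul, hK]
  have habs : |((t ^ Module.finrank ℝ E)⁻¹ : ℝ)| = (t ^ (d : ℝ))⁻¹ := by
    rw [hdim, abs_inv, abs_of_pos (pow_pos ht0 d), ← Real.rpow_natCast t d]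
  have key : (t ^ (d : ℝ))⁻¹ * (∫ a : E, g a) = t ^ (-p) * K := by
    rw [step1, ← habs, ← smul_eq_mul, ← step2, ← step3, step4]
  have hchange : (∫ a : E, g a) = t ^ (d : ℝ) * (t ^ (-p) * K) := by
    rw [← key, ← mul_assoc, mul_inv_cancel₀ (Real.rpow_pos_of_pos ht0 (d : ℝ)).ne', one_mul]
  rw [houter, hchange]
  have hfinal : p / K * (p⁻¹ * (t ^ (d : ℝ) * (t ^ (-p) * K)))
      = t ^ (d : ℝ) * t ^ (-p) := by
    field_simp
  rw [hfinal, ← Real.rpow_add ht0]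
  congr 1
  rw [hp]; ring
end
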